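/- Let τ > 0 and let v : (−τ,τ) → (0,∞) be continuously differentiable with v(0) = v₀ and v'(0) = v̇. Then lim_{t→0} S(v₀, v(t)) / t² = v̇² / ( 4·√( ε²/16 + v₀² ) ), where S is the Sinkhorn divergence between centered one-dimensional Gaussians expressed through the closed-form entropic cost Φ. -/

import Mathlib

open Filter Topology

noncomputable section

/-- `κ(v,w) = 1 + √(1 + 16vw/ε²)`. -/
noncomputable def kap (ε v w : ℝ) : ℝ := 1 + Real.sqrt (1 + 16 * v * w / ε ^ 2)

/-- The closed-form entropic optimal transport cost between centered one-dimensional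
Gaussians with variances `v, w` (Mallasto–Gerolin–Minh):
`Φ(v,w) = v + w − (ε/2)(κ − log κ + log 2 − 2)`. -/
noncomputable def PhiG (ε v w : ℝ) : ℝ :=
  v + w - (ε / 2) * (kap ε v w - Real.log (kap ε v w) + Real.log 2 - 2)

/-- The Sinkhorn divergence between centered one-dimensional Gaussians, expressed
through the closed-form entropic cost `Φ`. -/
noncomputable def SG (ε v w : ℝ) : ℝ :=
  PhiG ε v w - (1 / 2) * PhiG ε v v - (1 / 2) * PhiG ε w w

lemma kap_pos (ε v w : ℝ) : 0 < kap ε v w := by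
  have := Real.sqrt_nonneg (1 + 16 * v * w / ε ^ 2)
  unfold kap; linarith

-- derivative of w ↦ kap ε v₀ w
lemma hasDerivAt_kapA (ε v₀ w : ℝ) (hε : 0 < ε) (hv₀ : 0 < v₀) (hw : 0 < w) :
    HasDerivAt (fun w => kap ε v₀ w)
      (16 * v₀ / ε ^ 2 / (2 * Real.sqrt (1 + 16 * v₀ * w / ε ^ 2))) w := by
  have hpos : 0 < 1 + 16 * v₀ * w / ε ^ 2 := by positivity
  have hi : HasDerivAt (fun w : ℝ => 1 + 16 * v₀ * w / ε ^ 2) (16 * v₀ / ε ^ 2) w := by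
    have h1 : HasDerivAt (fun w : ℝ => w) 1 w := hasDerivAt_id w
    have := ((h1.const_mul (16 * v₀)).div_const (ε ^ 2)).const_add 1
    exact this.congr_deriv (by ring)
  have := hi.sqrt hpos.ne'
  have h2 : HasDerivAt (fun w => kap ε v₀ w)
      (16 * v₀ / ε ^ 2 / (2 * Real.sqrt (1 + 16 * v₀ * w / ε ^ 2))) w := by
    unfold kap
    exact this.const_add 1
  exact h2

-- derivative of w ↦ kap ε w w
lemma hasDerivAt_kapB (ε w : ℝ) (hε : 0 < ε) (hw : 0 < w) :
    HasDerivAt (fun w => kap ε w w)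
      (32 * w / ε ^ 2 / (2 * Real.sqrt (1 + 16 * w * w / ε ^ 2))) w := by
  have hpos : 0 < 1 + 16 * w * w / ε ^ 2 := by positivity
  have hi : HasDerivAt (fun w : ℝ => 1 + 16 * w * w / ε ^ 2) (32 * w / ε ^ 2) w := by
    have h1 : HasDerivAt (fun w : ℝ => 16 * w * w) (16 * 1 * w + 16 * w * 1) w :=
      ((hasDerivAt_id w).const_mul 16).mul (hasDerivAt_id w)
    have := (h1.div_const (ε ^ 2)).const_add 1
    exact this.congr_deriv (by ring)
  have := hi.sqrt hpos.ne'
  unfold kap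
  exact this.const_add 1

lemma hasDerivAt_SG (ε v₀ : ℝ) (hε : 0 < ε) (hv₀ : 0 < v₀) (w : ℝ) (hw : 0 < w) :
    HasDerivAt (fun w => SG ε v₀ w)
      ((4 / ε) * (w / kap ε w w - v₀ / kap ε v₀ w)) w := by
  have hsApos : 0 < Real.sqrt (1 + 16 * v₀ * w / ε ^ 2) := Real.sqrt_pos.2 (by positivity)
  have hsBpos : 0 < Real.sqrt (1 + 16 * w * w / ε ^ 2) := Real.sqrt_pos.2 (by positivity)
  have hA := hasDerivAt_kapA ε v₀ w hε hv₀ hw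
  have hB := hasDerivAt_kapB ε w hε hw
  set dA := 16 * v₀ / ε ^ 2 / (2 * Real.sqrt (1 + 16 * v₀ * w / ε ^ 2)) with hdA
  set dB := 32 * w / ε ^ 2 / (2 * Real.sqrt (1 + 16 * w * w / ε ^ 2)) with hdB
  have hane : kap ε v₀ w ≠ 0 := (kap_pos _ _ _).ne'
  have hbne : kap ε w w ≠ 0 := (kap_pos _ _ _).ne'
  have hGA : HasDerivAt (fun w => kap ε v₀ w - Real.log (kap ε v₀ w))
      (dA - dA / kap ε v₀ w) w := hA.sub (hA.log hane)
  have hGB : HasDerivAt (fun w => kap ε w w - Real.log (kap ε w w))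
      (dB - dB / kap ε w w) w := hB.sub (hB.log hbne)
  have hMA := ((hGA.add_const (Real.log 2)).sub_const 2).const_mul (ε / 2)
  have hMB := ((hGB.add_const (Real.log 2)).sub_const 2).const_mul (ε / 2)
  have hP1 := ((hasDerivAt_id w).const_add v₀).sub hMA
  have hP2 := ((hasDerivAt_id w).add (hasDerivAt_id w)).sub hMB
  have key := (hP1.sub_const ((1 : ℝ) / 2 * PhiG ε v₀ v₀)).sub (hP2.const_mul ((1 : ℝ) / 2))
  have hfun : HasDerivAt (fun w => SG ε v₀ w)
      (1 - ε / 2 * (dA - dA / kap ε v₀ w) -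
        1 / 2 * (1 + 1 - ε / 2 * (dB - dB / kap ε w w))) w := key
  convert hfun using 1
  have haK : kap ε v₀ w = 1 + Real.sqrt (1 + 16 * v₀ * w / ε ^ 2) := rfl
  have hbK : kap ε w w = 1 + Real.sqrt (1 + 16 * w * w / ε ^ 2) := rfl
  have ha0 : (1 : ℝ) + Real.sqrt (1 + 16 * v₀ * w / ε ^ 2) ≠ 0 := by positivity
  have hb0 : (1 : ℝ) + Real.sqrt (1 + 16 * w * w / ε ^ 2) ≠ 0 := by positivity
  rw [hdA, hdB, haK, hbK]
  field_simp
  ring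

lemma hasDerivAt_SG' (ε v₀ : ℝ) (hε : 0 < ε) (hv₀ : 0 < v₀) :
    HasDerivAt (fun w => (4 / ε) * (w / kap ε w w - v₀ / kap ε v₀ w))
      (2 / (ε * Real.sqrt (1 + 16 * v₀ * v₀ / ε ^ 2))) v₀ := by
  have hA := hasDerivAt_kapA ε v₀ v₀ hε hv₀ hv₀
  have hB := hasDerivAt_kapB ε v₀ hε hv₀
  have hane : kap ε v₀ v₀ ≠ 0 := (kap_pos _ _ _).ne'
  have h1 := (hasDerivAt_id v₀).div hB hane
  have h2 := (hasDerivAt_const v₀ v₀).div hA hane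
  have key := (h1.sub h2).const_mul ((4 : ℝ) / ε)
  refine key.congr_deriv ?_
  set s := Real.sqrt (1 + 16 * v₀ * v₀ / ε ^ 2) with hsdef
  have hs2 : s ^ 2 = 1 + 16 * v₀ * v₀ / ε ^ 2 := Real.sq_sqrt (by positivity)
  have hspos : 0 < s := Real.sqrt_pos.2 (by positivity)
  have ha0 : (1 : ℝ) + s ≠ 0 := by positivity
  have hk : kap ε v₀ v₀ = 1 + s := rfl
  have hv : 16 * v₀ * v₀ = ε ^ 2 * s ^ 2 - ε ^ 2 := by
    field_simp at hs2; linarith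
  simp only [hk, id]
  field_simp
  linear_combination (-4) * hv

lemma SG_self (ε v₀ : ℝ) : SG ε v₀ v₀ = 0 := by unfold SG; ring

lemma core_limit (ε v₀ : ℝ) (hε : 0 < ε) (hv₀ : 0 < v₀) :
    Tendsto (fun w => SG ε v₀ w / (w - v₀) ^ 2) (𝓝[≠] v₀)
      (𝓝 (1 / (ε * Real.sqrt (1 + 16 * v₀ * v₀ / ε ^ 2)))) := by
  set F' : ℝ → ℝ := fun w => (4 / ε) * (w / kap ε w w - v₀ / kap ε v₀ w) with hF'
  have hevpos : ∀ᶠ w in 𝓝[≠] v₀, 0 < w :=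
    (eventually_gt_nhds hv₀).filter_mono nhdsWithin_le_nhds
  have hne : ∀ᶠ w in 𝓝[≠] v₀, w ≠ v₀ := self_mem_nhdsWithin
  apply HasDerivAt.lhopital_zero_nhdsNE (f' := F') (g' := fun w => 2 * (w - v₀))
  · exact hevpos.mono fun w hw => hasDerivAt_SG ε v₀ hε hv₀ w hw
  · refine Eventually.of_forall fun w => ?_
    have := ((hasDerivAt_id w).sub_const v₀).pow 2
    refine this.congr_deriv ?_
    norm_num
  · exact hne.mono fun w hw => by
      simp only [ne_eq, mul_eq_zero, sub_eq_zero]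
      push_neg
      exact ⟨by norm_num, hw⟩
  · have hc := (hasDerivAt_SG ε v₀ hε hv₀ v₀ hv₀).continuousAt
    have := hc.tendsto.mono_left (nhdsWithin_le_nhds : 𝓝[≠] v₀ ≤ 𝓝 v₀)
    rwa [SG_self] at this
  · have : Tendsto (fun w : ℝ => (w - v₀) ^ 2) (𝓝 v₀) (𝓝 ((v₀ - v₀) ^ 2)) := by
      exact ((continuous_id.sub continuous_const).pow 2).tendsto v₀
    simpa using this.mono_left nhdsWithin_le_nhds
  · have hd := hasDerivAt_SG' ε v₀ hε hv₀
    have hslope := hasDerivAt_iff_tendsto_slope.1 hd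
    have hF'0 : F' v₀ = 0 := by simp [hF']
    have h2 := hslope.div_const 2
    have : (2 : ℝ) / (ε * Real.sqrt (1 + 16 * v₀ * v₀ / ε ^ 2)) / 2
        = 1 / (ε * Real.sqrt (1 + 16 * v₀ * v₀ / ε ^ 2)) := by ring
    rw [this] at h2
    refine h2.congr' (hne.mono fun w hw => ?_)
    rw [slope_def_field]
    simp only [hF']
    have hwv : w - v₀ ≠ 0 := sub_ne_zero.2 hw
    have hk1 : kap ε w w ≠ 0 := (kap_pos _ _ _).ne'
    have hk2 : kap ε v₀ w ≠ 0 := (kap_pos _ _ _).ne'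
    field_simp
    ring

/-- **The metric tensor on one-dimensional Gaussians.** If `v : (−τ,τ) → (0,∞)` is
continuously differentiable with `v(0) = v₀` and `v'(0) = v̇`, then
`lim_{t→0} S(v₀, v(t))/t² = v̇²/(4·√(ε²/16 + v₀²))`. -/
theorem stmt12 (ε : ℝ) (hε : 0 < ε) (τ : ℝ) (hτ : 0 < τ)
    (v v' : ℝ → ℝ) (v₀ vdot : ℝ)
    (hpos : ∀ t ∈ Set.Ioo (-τ) τ, 0 < v t)
    (hderiv : ∀ t ∈ Set.Ioo (-τ) τ, HasDerivAt v (v' t) t)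
    (hcont : ContinuousOn v' (Set.Ioo (-τ) τ))
    (h0 : v 0 = v₀) (h0' : v' 0 = vdot) :
    Tendsto (fun t : ℝ => SG ε v₀ (v t) / t ^ 2) (𝓝[≠] 0)
      (𝓝 (vdot ^ 2 / (4 * Real.sqrt (ε ^ 2 / 16 + v₀ ^ 2)))) := by
  have h0mem : (0 : ℝ) ∈ Set.Ioo (-τ) τ := ⟨by linarith, hτ⟩
  have hv₀ : 0 < v₀ := h0 ▸ hpos 0 h0mem
  have hvd : HasDerivAt v vdot 0 := h0' ▸ hderiv 0 h0mem
  set s := Real.sqrt (1 + 16 * v₀ * v₀ / ε ^ 2) with hs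
  set c : ℝ := 1 / (ε * s) with hc
  have hcore := core_limit ε v₀ hε hv₀
  set F : ℝ → ℝ := fun w => if w = v₀ then c else SG ε v₀ w / (w - v₀) ^ 2 with hF
  have hFtend : Tendsto F (𝓝 v₀) (𝓝 c) := by
    rw [← nhdsNE_sup_pure v₀, tendsto_sup]
    constructor
    · refine hcore.congr' ?_
      have hne : ∀ᶠ w in 𝓝[≠] v₀, w ≠ v₀ := self_mem_nhdsWithin
      exact hne.mono fun w hw => (if_neg hw).symm
    · simpa [hF] using tendsto_pure_nhds F v₀
  have hvt : Tendsto v (𝓝[≠] (0 : ℝ)) (𝓝 v₀) := by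
    have := hvd.continuousAt.tendsto.mono_left (nhdsWithin_le_nhds : 𝓝[≠] (0:ℝ) ≤ 𝓝 0)
    rwa [h0] at this
  have hslope : Tendsto (fun t => (v t - v₀) / t) (𝓝[≠] (0 : ℝ)) (𝓝 vdot) := by
    have hsl := hasDerivAt_iff_tendsto_slope.1 hvd
    refine hsl.congr' ?_
    refine Eventually.of_forall fun t => ?_
    rw [slope_def_field, h0, sub_zero]
  have hmul : Tendsto (fun t => F (v t) * ((v t - v₀) / t) ^ 2) (𝓝[≠] (0 : ℝ))
      (𝓝 (c * vdot ^ 2)) := (hFtend.comp hvt).mul (hslope.pow 2)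
  have heq : ∀ᶠ t in 𝓝[≠] (0 : ℝ), F (v t) * ((v t - v₀) / t) ^ 2 = SG ε v₀ (v t) / t ^ 2 := by
    filter_upwards [self_mem_nhdsWithin] with t ht
    have ht0 : (t : ℝ) ≠ 0 := ht
    by_cases hv : v t = v₀
    · simp [hF, hv, SG_self]
    · simp only [hF, if_neg hv]
      have hne : v t - v₀ ≠ 0 := sub_ne_zero.2 hv
      field_simp
  have hfinal := hmul.congr' heq
  have hconst : c * vdot ^ 2 = vdot ^ 2 / (4 * Real.sqrt (ε ^ 2 / 16 + v₀ ^ 2)) := by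
    have h1 : ε * s = Real.sqrt (ε ^ 2 * (1 + 16 * v₀ * v₀ / ε ^ 2)) := by
      rw [Real.sqrt_mul (sq_nonneg ε), Real.sqrt_sq hε.le]
    have h2 : ε ^ 2 * (1 + 16 * v₀ * v₀ / ε ^ 2) = 16 * (ε ^ 2 / 16 + v₀ ^ 2) := by
      field_simp
    have h3 : Real.sqrt (16 * (ε ^ 2 / 16 + v₀ ^ 2)) = 4 * Real.sqrt (ε ^ 2 / 16 + v₀ ^ 2) := by
      rw [show (16 : ℝ) = 4 ^ 2 by norm_num, Real.sqrt_mul (by positivity), Real.sqrt_sq (by norm_num)]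
    have h4 : ε * s = 4 * Real.sqrt (ε ^ 2 / 16 + v₀ ^ 2) := by rw [h1, h2, h3]
    rw [hc, h4]; ring
  rwa [hconst] at hfinal
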